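/- arXiv:2404.19662 — 3 statements merged into one kernel-verified Lean document; each statement's English description precedes it below -/
import Mathlib

section
/- For every positive integer p, the sum over l from 0 to p of binom(2p, 2l) * C_l * C_{p-l} equals C_p * C_{p+1}, where C_k denotes the k-th Catalan number. -/
open Nat Finset

private noncomputable def Tq (p l : ℕ) : ℚ :=
  (2 * p)! / ((l)! * (l + 1)! * (p - l)! * (p - l + 1)!)

private noncomputable def Hq (p l : ℕ) : ℚ :=
  2 * (2 * p + 1) * ((3 * p + 5 : ℚ) - 2 * l) * l * (l + 1) * (2 * p)! /
    ((l)! * (l + 1)! * (p + 1 - l)! * (p + 2 - l)!)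

private lemma cat_q (n : ℕ) : (catalan n : ℚ) = (2 * n)! / ((n)! * (n + 1)!) := by
  have h := succ_mul_catalan_eq_centralBinom n
  have hc : (n.centralBinom : ℚ) = (2 * n)! / ((n)! * (n)!) := by
    have e : 2 * n - n = n := by omega
    rw [Nat.centralBinom, Nat.cast_choose ℚ (by omega : n ≤ 2 * n), e]
  have h2 : ((n : ℚ) + 1) * catalan n = (2 * n)! / ((n)! * (n)!) := by
    rw [← hc]
    exact_mod_cast congrArg (Nat.cast : ℕ → ℚ) h
  have hf : ((n)! : ℚ) ≠ 0 := by exact_mod_cast n.factorial_ne_zero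
  have hn1 : ((n : ℚ) + 1) ≠ 0 := by positivity
  rw [Nat.factorial_succ]
  push_cast
  field_simp at h2 ⊢
  linarith [h2]

private lemma term_eq (p l : ℕ) (hl : l ≤ p) :
    (((2 * p).choose (2 * l) : ℚ) * catalan l * catalan (p - l)) = Tq p l := by
  have e : 2 * p - 2 * l = 2 * (p - l) := by omega
  have h1 : ((2 * p).choose (2 * l) : ℚ) = (2 * p)! / ((2 * l)! * (2 * (p - l))!) := by
    rw [Nat.cast_choose ℚ (by omega : 2 * l ≤ 2 * p), e]
  rw [h1, cat_q l, cat_q (p - l), Tq]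
  have h2 : ((2 * l)! : ℚ) ≠ 0 := by exact_mod_cast (2 * l).factorial_ne_zero
  have h3 : ((2 * (p - l))! : ℚ) ≠ 0 := by exact_mod_cast (2 * (p - l)).factorial_ne_zero
  have h4 : ((l)! : ℚ) ≠ 0 := by exact_mod_cast l.factorial_ne_zero
  have h5 : ((l + 1)! : ℚ) ≠ 0 := by exact_mod_cast (l + 1).factorial_ne_zero
  have h6 : ((p - l)! : ℚ) ≠ 0 := by exact_mod_cast (p - l).factorial_ne_zero
  have h7 : ((p - l + 1)! : ℚ) ≠ 0 := by exact_mod_cast (p - l + 1).factorial_ne_zero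
  field_simp

private lemma step (a b : ℕ) :
    (((a + b : ℕ) : ℚ) + 2) * (((a + b : ℕ) : ℚ) + 3) * Tq (a + b + 1) a
      - 4 * (2 * ((a + b : ℕ) : ℚ) + 1) * (2 * ((a + b : ℕ) : ℚ) + 3) * Tq (a + b) a
    = Hq (a + b) a - Hq (a + b) (a + 1) := by
  have e1 : a + b - a = b := by omega
  have e2 : a + b - a + 1 = b + 1 := by omega
  have e3 : a + b + 1 - a = b + 1 := by omega
  have e4 : a + b + 1 - a + 1 = b + 2 := by omega
  have e5 : a + b + 1 - (a + 1) = b := by omega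
  have e6 : a + b + 2 - a = b + 2 := by omega
  have e7 : a + b + 2 - (a + 1) = b + 1 := by omega
  simp only [Tq, Hq, e1, e2, e3, e4, e5, e6, e7]
  have f1 : ((2 * (a + b + 1))! : ℚ)
      = (2 * (a + b) + 2) * ((2 * (a + b) + 1) * (2 * (a + b))!) := by
    rw [show 2 * (a + b + 1) = (2 * (a + b) + 1) + 1 by ring, Nat.factorial_succ,
      Nat.factorial_succ]
    push_cast
    ring
  have f2 : ((a + 1)! : ℚ) = (a + 1) * (a)! := by
    rw [Nat.factorial_succ]; push_cast; ring
  have f3 : ((a + 2)! : ℚ) = (a + 2) * ((a + 1) * (a)!) := by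
    rw [show a + 2 = (a + 1) + 1 from rfl, Nat.factorial_succ, Nat.factorial_succ]
    push_cast; ring
  have f4 : ((b + 1)! : ℚ) = (b + 1) * (b)! := by
    rw [Nat.factorial_succ]; push_cast; ring
  have f5 : ((b + 2)! : ℚ) = (b + 2) * ((b + 1) * (b)!) := by
    rw [show b + 2 = (b + 1) + 1 from rfl, Nat.factorial_succ, Nat.factorial_succ]
    push_cast; ring
  rw [f1, f2, f3, f4, f5]
  have ha : ((a)! : ℚ) ≠ 0 := by exact_mod_cast a.factorial_ne_zero
  have hb : ((b)! : ℚ) ≠ 0 := by exact_mod_cast b.factorial_ne_zero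
  have hab : ((2 * (a + b))! : ℚ) ≠ 0 := by exact_mod_cast (2 * (a + b)).factorial_ne_zero
  push_cast
  field_simp
  ring

private lemma Hq_zero (p : ℕ) : Hq p 0 = 0 := by
  simp [Hq]

private lemma Hq_top (p : ℕ) :
    Hq p (p + 1) = ((p : ℚ) + 2) * ((p : ℚ) + 3) * Tq (p + 1) (p + 1) := by
  have e1 : p + 1 - (p + 1) = 0 := by omega
  have e2 : p + 2 - (p + 1) = 1 := by omega
  have e3 : p + 1 - (p + 1) + 1 = 1 := by omega
  simp only [Hq, Tq, e1, e2, e3]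
  have f1 : ((2 * (p + 1))! : ℚ)
      = (2 * p + 2) * ((2 * p + 1) * (2 * p)!) := by
    rw [show 2 * (p + 1) = (2 * p + 1) + 1 by ring, Nat.factorial_succ, Nat.factorial_succ]
    push_cast; ring
  have f2 : ((p + 1)! : ℚ) = (p + 1) * (p)! := by
    rw [Nat.factorial_succ]; push_cast; ring
  have f3 : ((p + 2)! : ℚ) = (p + 2) * ((p + 1) * (p)!) := by
    rw [show p + 2 = (p + 1) + 1 from rfl, Nat.factorial_succ, Nat.factorial_succ]
    push_cast; ring
  rw [f1, f2, f3]
  have hp' : ((p)! : ℚ) ≠ 0 := by exact_mod_cast p.factorial_ne_zero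
  have hpp : ((2 * p)! : ℚ) ≠ 0 := by exact_mod_cast (2 * p).factorial_ne_zero
  simp only [Nat.factorial_zero, Nat.factorial_one]
  push_cast
  field_simp
  ring

private lemma Sq_rec (p : ℕ) :
    (∑ l ∈ range (p + 2), Tq (p + 1) l) * (((p : ℚ) + 2) * ((p : ℚ) + 3))
      = (∑ l ∈ range (p + 1), Tq p l) * (4 * (2 * (p : ℚ) + 1) * (2 * (p : ℚ) + 3)) := by
  have key : ∑ l ∈ range (p + 1),
      (((p : ℚ) + 2) * ((p : ℚ) + 3) * Tq (p + 1) l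
        - 4 * (2 * (p : ℚ) + 1) * (2 * (p : ℚ) + 3) * Tq p l)
      = Hq p 0 - Hq p (p + 1) := by
    rw [← Finset.sum_range_sub' (fun l => Hq p l) (p + 1)]
    apply Finset.sum_congr rfl
    intro l hl
    have hlp : l ≤ p := by simpa [Nat.lt_succ_iff] using hl
    have := step l (p - l)
    have hb : l + (p - l) = p := by omega
    rw [hb] at this
    exact this
  rw [Hq_zero, Hq_top] at key
  rw [Finset.sum_range_succ]
  have expand : ∑ l ∈ range (p + 1),
      (((p : ℚ) + 2) * ((p : ℚ) + 3) * Tq (p + 1) l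
        - 4 * (2 * (p : ℚ) + 1) * (2 * (p : ℚ) + 3) * Tq p l)
      = ((p : ℚ) + 2) * ((p : ℚ) + 3) * ∑ l ∈ range (p + 1), Tq (p + 1) l
        - 4 * (2 * (p : ℚ) + 1) * (2 * (p : ℚ) + 3) * ∑ l ∈ range (p + 1), Tq p l := by
    rw [Finset.sum_sub_distrib, Finset.mul_sum, Finset.mul_sum]
  rw [expand] at key
  linarith [key]

private lemma cat_ratio (p : ℕ) :
    ((p : ℚ) + 2) * catalan (p + 1) = 2 * (2 * (p : ℚ) + 1) * catalan p := by
  have h1 := succ_mul_catalan_eq_centralBinom p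
  have h2 := succ_mul_catalan_eq_centralBinom (p + 1)
  have h3 := Nat.succ_mul_centralBinom_succ p
  have q1 : ((p : ℚ) + 1) * catalan p = p.centralBinom := by exact_mod_cast h1
  have q2 : ((p : ℚ) + 2) * catalan (p + 1) = (p + 1).centralBinom := by
    exact_mod_cast h2
  have q3 : ((p : ℚ) + 1) * (p + 1).centralBinom
      = 2 * (2 * (p : ℚ) + 1) * p.centralBinom := by exact_mod_cast h3
  have hp1 : ((p : ℚ) + 1) ≠ 0 := by positivity
  rw [q2]
  rw [← q1] at q3
  have key : ((p : ℚ) + 1) * ((p + 1).centralBinom : ℚ)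
      = ((p : ℚ) + 1) * (2 * (2 * (p : ℚ) + 1) * catalan p) := by
    linear_combination q3
  exact mul_left_cancel₀ hp1 key

private lemma main_q (p : ℕ) :
    ∑ l ∈ range (p + 1), Tq p l = (catalan p : ℚ) * catalan (p + 1) := by
  induction p with
  | zero =>
      simp [Tq, catalan_one]
  | succ n ih =>
      have hrec := Sq_rec n
      rw [ih] at hrec
      have hr := cat_ratio n
      have hr2 := cat_ratio (n + 1)
      have h2 : ((n : ℚ) + 2) ≠ 0 := by positivity
      have h3 : ((n : ℚ) + 3) ≠ 0 := by positivity
      have hprod : ((n : ℚ) + 2) * ((n : ℚ) + 3) ≠ 0 := mul_ne_zero h2 h3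
      have goal_mul : (∑ l ∈ range (n + 2), Tq (n + 1) l) * (((n : ℚ) + 2) * ((n : ℚ) + 3))
          = ((catalan (n + 1) : ℚ) * catalan (n + 2)) * (((n : ℚ) + 2) * ((n : ℚ) + 3)) := by
        rw [hrec]
        have hr2' : ((n : ℚ) + 3) * catalan (n + 2) = 2 * (2 * (n : ℚ) + 3) * catalan (n + 1) := by
          have := cat_ratio (n + 1)
          push_cast at this ⊢
          linarith [this]
        calc (catalan n : ℚ) * catalan (n + 1) * (4 * (2 * (n : ℚ) + 1) * (2 * (n : ℚ) + 3))
            = (2 * (2 * (n : ℚ) + 1) * catalan n) * (2 * (2 * (n : ℚ) + 3) * catalan (n + 1)) := by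
              ring
          _ = (((n : ℚ) + 2) * catalan (n + 1)) * (((n : ℚ) + 3) * catalan (n + 2)) := by
              rw [hr, hr2']
          _ = ((catalan (n + 1) : ℚ) * catalan (n + 2)) * (((n : ℚ) + 2) * ((n : ℚ) + 3)) := by
              ring
      have := mul_right_cancel₀ hprod goal_mul
      convert this using 2 <;> push_cast <;> ring
  
theorem catalan_binom_sum (p : ℕ) (hp : 0 < p) :
    ∑ l ∈ Finset.range (p + 1),
        Nat.choose (2 * p) (2 * l) * catalan l * catalan (p - l)
      = catalan p * catalan (p + 1) := by
  have key : ((∑ l ∈ Finset.range (p + 1),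
      Nat.choose (2 * p) (2 * l) * catalan l * catalan (p - l) : ℕ) : ℚ)
      = ((catalan p * catalan (p + 1) : ℕ) : ℚ) := by
    push_cast
    rw [← main_q p]
    apply Finset.sum_congr rfl
    intro l hl
    exact term_eq p l (by simpa [Nat.lt_succ_iff] using hl)
  exact_mod_cast key
end

section
/- Let π be a pair partition of [2p] whose intersection graph is bipartite. Then the number of ways to write π as a 'left-right noncrossing representation', i.e. the number of ordered pairs (π_1, π_2) together with a subset I ⊆ [2p] such that π_1 is a noncrossing pair partition of I, π_2 is a noncrossing pair partition of the complement I^c, and π = π_1 ∪ π_2, equals 2^{cc(π)}, where cc(π) is the number of connected components of the intersection graph of π. -/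
open Finset

def Crosses {n : ℕ} (V W : Finset (Fin n)) : Prop :=
  ∃ i k j l : Fin n, i < k ∧ k < j ∧ j < l ∧ i ∈ V ∧ j ∈ V ∧ k ∈ W ∧ l ∈ W

def CrossSym {n : ℕ} (V W : Finset (Fin n)) : Prop := Crosses V W ∨ Crosses W V

def IsPartitionOn {n : ℕ} (S : Finset (Fin n)) (π : Finset (Finset (Fin n))) : Prop :=
  (∀ V ∈ π, V.Nonempty ∧ V ⊆ S) ∧ ∀ i ∈ S, ∃! V, V ∈ π ∧ i ∈ V

def IsPairPartitionOn {n : ℕ} (S : Finset (Fin n)) (π : Finset (Finset (Fin n))) : Prop :=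
  IsPartitionOn S π ∧ ∀ V ∈ π, V.card = 2

def IsPairPartition (n : ℕ) (π : Finset (Finset (Fin n))) : Prop :=
  IsPairPartitionOn Finset.univ π

def NoncrossingPart {n : ℕ} (π : Finset (Finset (Fin n))) : Prop :=
  ∀ V ∈ π, ∀ W ∈ π, V ≠ W → ¬ CrossSym V W

def interGraph {n : ℕ} (π : Finset (Finset (Fin n))) :
    SimpleGraph {V : Finset (Fin n) // V ∈ π} where
  Adj V W := V ≠ W ∧ CrossSym V.1 W.1
  symm := by
    refine ⟨?_⟩
    rintro V W ⟨h1, h2⟩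
    exact ⟨h1.symm, h2.symm⟩
  loopless := by refine ⟨?_⟩; rintro V ⟨h1, _⟩; exact h1 rfl

noncomputable def ccCount {n : ℕ} (π : Finset (Finset (Fin n))) : ℕ :=
  Nat.card (interGraph π).ConnectedComponent

def IsBipartitePart {n : ℕ} (π : Finset (Finset (Fin n))) : Prop :=
  (interGraph π).Colorable 2

def IsConnectedPart {n : ℕ} (π : Finset (Finset (Fin n))) : Prop :=
  (interGraph π).Connected

open scoped Classical in
noncomputable def crBlocks {n : ℕ} (π : Finset (Finset (Fin n))) : Finset (Finset (Fin n)) :=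
  π.filter (fun V => ∃ W ∈ π, W ≠ V ∧ CrossSym V W)

open scoped Classical in
noncomputable def ncrBlocks {n : ℕ} (π : Finset (Finset (Fin n))) : Finset (Finset (Fin n)) :=
  π.filter (fun V => ¬ ∃ W ∈ π, W ≠ V ∧ CrossSym V W)

noncomputable def crCount {n : ℕ} (π : Finset (Finset (Fin n))) : ℕ := (crBlocks π).card
noncomputable def ncrCount {n : ℕ} (π : Finset (Finset (Fin n))) : ℕ := (ncrBlocks π).card

open scoped Classical in
noncomputable def compPart {n : ℕ} (π : Finset (Finset (Fin n))) : Finset (Finset (Fin n)) :=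
  π.attach.image fun V => Finset.univ.filter fun i : Fin n =>
    ∃ W, ∃ hW : W ∈ π, i ∈ W ∧ (interGraph π).Reachable V ⟨W, hW⟩

def restrictPart {n : ℕ} (π : Finset (Finset (Fin n))) (T : Finset (Fin n)) :
    Finset (Finset (Fin n)) :=
  π.filter (· ⊆ T)

open scoped Classical in
noncomputable def pairPartitions (n : ℕ) : Finset (Finset (Finset (Fin n))) :=
  Finset.univ.filter (IsPairPartition n)

open scoped Classical in
noncomputable def biPairPartitions (n : ℕ) : Finset (Finset (Finset (Fin n))) :=
  (pairPartitions n).filter IsBipartitePart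

open scoped Classical in
noncomputable def biconPairPartitions (n : ℕ) : Finset (Finset (Finset (Fin n))) :=
  (biPairPartitions n).filter IsConnectedPart

open scoped Classical in
noncomputable def ncPairPartitions (n : ℕ) : Finset (Finset (Finset (Fin n))) :=
  (pairPartitions n).filter NoncrossingPart

open scoped Classical in
noncomputable def ncPartitions (n : ℕ) : Finset (Finset (Finset (Fin n))) :=
  Finset.univ.filter (fun π => IsPartitionOn Finset.univ π ∧ NoncrossingPart π)

def NoncrossingOn {n : ℕ} (π : Finset (Finset (Fin n))) : Prop :=
  ∀ V ∈ π, ∀ W ∈ π, V ≠ W → ¬ CrossSym V W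

section Aux
open scoped Classical

variable {n : ℕ}

/-- restriction of a pair partition to a subfamily -/
lemma pairPartitionOn_of_subset {π A : Finset (Finset (Fin n))}
    (hπ : IsPairPartition n π) (hA : A ⊆ π) :
    IsPairPartitionOn (A.biUnion id) A := by
  obtain ⟨⟨hblocks, huniq⟩, hcard⟩ := hπ
  refine ⟨⟨fun V hV => ⟨(hblocks V (hA hV)).1,
      fun i hi => Finset.mem_biUnion.2 ⟨V, hV, hi⟩⟩, ?_⟩, fun V hV => hcard V (hA hV)⟩
  intro i hi
  obtain ⟨V, hV, hiV⟩ := Finset.mem_biUnion.1 hi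
  refine ⟨V, ⟨hV, hiV⟩, ?_⟩
  rintro W ⟨hW, hiW⟩
  obtain ⟨U, -, hU⟩ := huniq i (Finset.mem_univ i)
  rw [hU W ⟨hA hW, hiW⟩, hU V ⟨hA hV, hiV⟩]

lemma biUnion_sdiff_eq_compl {π A : Finset (Finset (Fin n))}
    (hπ : IsPairPartition n π) (hA : A ⊆ π) :
    (π \ A).biUnion id = (A.biUnion id)ᶜ := by
  obtain ⟨⟨hblocks, huniq⟩, -⟩ := hπ
  ext i
  obtain ⟨V, ⟨hVπ, hiV⟩, hV⟩ := huniq i (Finset.mem_univ i)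
  simp only [Finset.mem_biUnion, Finset.mem_compl, Finset.mem_sdiff, id, not_exists]
  constructor
  · rintro ⟨W, ⟨hWπ, hWA⟩, hiW⟩ U ⟨hUA, hiU⟩
    exact hWA (by rw [hV W ⟨hWπ, hiW⟩, ← hV U ⟨hA hUA, hiU⟩]; exact hUA)
  · intro h
    exact ⟨V, ⟨hVπ, fun hVA => h V ⟨hVA, hiV⟩⟩, hiV⟩

noncomputable def colA (π : Finset (Finset (Fin n))) (c : {V // V ∈ π} → Bool) :
    Finset (Finset (Fin n)) := (π.attach.filter fun v => c v = true).image Subtype.val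

noncomputable def colB (π : Finset (Finset (Fin n))) (c : {V // V ∈ π} → Bool) :
    Finset (Finset (Fin n)) := (π.attach.filter fun v => c v = false).image Subtype.val

lemma mem_colA {π : Finset (Finset (Fin n))} {c : {V // V ∈ π} → Bool} {V : Finset (Fin n)} :
    V ∈ colA π c ↔ ∃ h : V ∈ π, c ⟨V, h⟩ = true := by
  simp only [colA, Finset.mem_image, Finset.mem_filter, Finset.mem_attach, true_and]
  constructor
  · rintro ⟨⟨W, hW⟩, hc, rfl⟩; exact ⟨hW, hc⟩
  · rintro ⟨h, hc⟩; exact ⟨⟨V, h⟩, hc, rfl⟩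

lemma mem_colB {π : Finset (Finset (Fin n))} {c : {V // V ∈ π} → Bool} {V : Finset (Fin n)} :
    V ∈ colB π c ↔ ∃ h : V ∈ π, c ⟨V, h⟩ = false := by
  simp only [colB, Finset.mem_image, Finset.mem_filter, Finset.mem_attach, true_and]
  constructor
  · rintro ⟨⟨W, hW⟩, hc, rfl⟩; exact ⟨hW, hc⟩
  · rintro ⟨h, hc⟩; exact ⟨⟨V, h⟩, hc, rfl⟩

lemma colA_subset {π : Finset (Finset (Fin n))} {c : {V // V ∈ π} → Bool} :
    colA π c ⊆ π := fun V hV => (mem_colA.1 hV).1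

lemma colB_eq_sdiff {π : Finset (Finset (Fin n))} {c : {V // V ∈ π} → Bool} :
    colB π c = π \ colA π c := by
  ext V
  simp only [mem_colB, Finset.mem_sdiff, mem_colA]
  constructor
  · rintro ⟨h, hc⟩
    exact ⟨h, by rintro ⟨h', hc'⟩; rw [hc] at hc'; exact Bool.false_ne_true hc'⟩
  · rintro ⟨h, hc⟩
    refine ⟨h, ?_⟩
    cases hcv : c ⟨V, h⟩
    · rfl
    · exact absurd ⟨h, hcv⟩ hc

lemma colA_union_colB {π : Finset (Finset (Fin n))} {c : {V // V ∈ π} → Bool} :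
    colA π c ∪ colB π c = π := by
  ext V
  simp only [Finset.mem_union, mem_colA, mem_colB]
  constructor
  · rintro (⟨h, -⟩ | ⟨h, -⟩) <;> exact h
  · intro h
    cases hcv : c ⟨V, h⟩
    · exact Or.inr ⟨h, hcv⟩
    · exact Or.inl ⟨h, hcv⟩

lemma noncrossing_colA {π : Finset (Finset (Fin n))} {c : {V // V ∈ π} → Bool}
    (hc : ∀ v w, (interGraph π).Adj v w → c v ≠ c w) : NoncrossingOn (colA π c) := by
  intro V hV W hW hne hcr
  obtain ⟨hVπ, hcV⟩ := mem_colA.1 hV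
  obtain ⟨hWπ, hcW⟩ := mem_colA.1 hW
  exact hc ⟨V, hVπ⟩ ⟨W, hWπ⟩ ⟨by simpa [Subtype.ext_iff] using hne, hcr⟩ (by rw [hcV, hcW])

lemma noncrossing_colB {π : Finset (Finset (Fin n))} {c : {V // V ∈ π} → Bool}
    (hc : ∀ v w, (interGraph π).Adj v w → c v ≠ c w) : NoncrossingOn (colB π c) := by
  intro V hV W hW hne hcr
  obtain ⟨hVπ, hcV⟩ := mem_colB.1 hV
  obtain ⟨hWπ, hcW⟩ := mem_colB.1 hW
  exact hc ⟨V, hVπ⟩ ⟨W, hWπ⟩ ⟨by simpa [Subtype.ext_iff] using hne, hcr⟩ (by rw [hcV, hcW])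

lemma eq_of_reachable {V : Type*} {G : SimpleGraph V} {β : Type*} {f : V → β}
    (hf : ∀ v w, G.Adj v w → f v = f w) {v w : V} (h : G.Reachable v w) : f v = f w := by
  obtain ⟨walk⟩ := h
  induction walk with
  | nil => rfl
  | cons h p ih => exact (hf _ _ h).trans ih

end Aux

open scoped Classical in
theorem card_left_right_representations (p : ℕ) (π : Finset (Finset (Fin (2 * p))))
    (hπ : IsPairPartition (2 * p) π) (hbi : IsBipartitePart π) :
    (Finset.univ.filter
        (fun x : Finset (Fin (2 * p)) × Finset (Finset (Fin (2 * p))) × Finset (Finset (Fin (2 * p))) =>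
          IsPairPartitionOn x.1 x.2.1 ∧ NoncrossingOn x.2.1 ∧
          IsPairPartitionOn x.1ᶜ x.2.2 ∧ NoncrossingOn x.2.2 ∧
          π = x.2.1 ∪ x.2.2)).card = 2 ^ ccCount π := by
  have hbi2 : (interGraph π).Colorable 2 := hbi
  classical
  set G := interGraph π with hG
  -- the fixed proper coloring from bipartiteness
  obtain ⟨C⟩ := hbi2
  set c₀ : {V // V ∈ π} → Bool := fun v => decide (C v = 1) with hc₀
  have hc₀p : ∀ v w, G.Adj v w → c₀ v ≠ c₀ w := by
    intro v w hvw h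
    simp only [hc₀, decide_eq_decide] at h
    have h1 : C v ≠ C w := C.valid hvw
    have hkey : ∀ a b : Fin 2, a ≠ b → (a = 1 ↔ b = 1) → False := by decide
    exact hkey _ _ h1 h
  -- equiv 1 : representations ≃ proper colorings
  let P : (Finset (Fin (2 * p)) × Finset (Finset (Fin (2 * p))) × Finset (Finset (Fin (2 * p)))) → Prop :=
    fun x => IsPairPartitionOn x.1 x.2.1 ∧ NoncrossingOn x.2.1 ∧
          IsPairPartitionOn x.1ᶜ x.2.2 ∧ NoncrossingOn x.2.2 ∧
          π = x.2.1 ∪ x.2.2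
  let Q : ({V // V ∈ π} → Bool) → Prop := fun c => ∀ v w, G.Adj v w → c v ≠ c w
  have key : ∀ c, Q c → P ((colA π c).biUnion id, colA π c, colB π c) := by
    intro c hc
    refine ⟨pairPartitionOn_of_subset hπ colA_subset, noncrossing_colA hc, ?_,
      noncrossing_colB hc, colA_union_colB.symm⟩
    have h1 : IsPairPartitionOn ((π \ colA π c).biUnion id) (π \ colA π c) :=
      pairPartitionOn_of_subset hπ (Finset.sdiff_subset)
    rw [biUnion_sdiff_eq_compl hπ colA_subset] at h1
    rw [colB_eq_sdiff]
    exact h1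
  let e1 : {x // P x} ≃ {c : {V // V ∈ π} → Bool // Q c} := by
    refine ⟨fun x => ⟨fun v => decide (v.1 ∈ x.1.2.1), ?_⟩,
      fun c => ⟨((colA π c.1).biUnion id, colA π c.1, colB π c.1), key c.1 c.2⟩, ?_, ?_⟩
    · obtain ⟨⟨I, A, B⟩, hA, hnA, hB, hnB, hU⟩ := x
      intro v w hvw h
      simp only [decide_eq_decide] at h
      have hne : v.1 ≠ w.1 := fun hh => hvw.1 (Subtype.ext hh)
      by_cases hv : v.1 ∈ A
      · exact hnA v.1 hv w.1 (h.1 hv) hne hvw.2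
      · have hv' : v.1 ∈ B := by
          have hvm : v.1 ∈ A ∪ B := by rw [← hU]; exact v.2
          rcases Finset.mem_union.1 hvm with h' | h'
          · exact absurd h' hv
          · exact h'
        have hw' : w.1 ∈ B := by
          have hw : w.1 ∉ A := fun hh => hv (h.2 hh)
          have hwm : w.1 ∈ A ∪ B := by rw [← hU]; exact w.2
          rcases Finset.mem_union.1 hwm with h' | h'
          · exact absurd h' hw
          · exact h'
        exact hnB v.1 hv' w.1 hw' hne hvw.2
    · rintro ⟨⟨I, A, B⟩, hA, hnA, hB, hnB, hU⟩
      have hAπ : A ⊆ π := by rw [hU]; exact Finset.subset_union_left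
      have hAB : ∀ V ∈ B, V ∉ A := by
        intro V hVB hVA
        obtain ⟨i, hi⟩ := (hA.1.1 V hVA).1
        have h1 : i ∈ I := (hA.1.1 V hVA).2 hi
        have h2 : i ∈ Iᶜ := (hB.1.1 V hVB).2 hi
        exact (Finset.mem_compl.1 h2) h1
      have hcA : colA π (fun v => decide (v.1 ∈ A)) = A := by
        ext V
        rw [mem_colA]
        constructor
        · rintro ⟨h, hc⟩; exact of_decide_eq_true hc
        · intro h; exact ⟨hAπ h, decide_eq_true h⟩
      have hcB : colB π (fun v => decide (v.1 ∈ A)) = B := by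
        rw [colB_eq_sdiff, hcA]
        ext V
        simp only [Finset.mem_sdiff]
        constructor
        · rintro ⟨hVπ, hVA⟩
          rw [hU] at hVπ
          rcases Finset.mem_union.1 hVπ with h' | h'
          · exact absurd h' hVA
          · exact h'
        · intro hVB
          refine ⟨by rw [hU]; exact Finset.mem_union_right _ hVB, hAB V hVB⟩
      have hI : A.biUnion id = I := by
        ext i
        simp only [Finset.mem_biUnion, id]
        constructor
        · rintro ⟨V, hV, hiV⟩; exact (hA.1.1 V hV).2 hiV
        · intro hi
          obtain ⟨V, ⟨hV, hiV⟩, -⟩ := hA.1.2 i hi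
          exact ⟨V, hV, hiV⟩
      simp only [Subtype.mk.injEq, Prod.mk.injEq]
      exact ⟨by rw [hcA, hI], hcA, hcB⟩
    · rintro ⟨c, hc⟩
      simp only [Subtype.mk.injEq]
      funext v
      by_cases hv : c v
      · have : v.1 ∈ colA π c := mem_colA.2 ⟨v.2, by simpa using hv⟩
        simp [this, hv]
      · have : v.1 ∉ colA π c := by
          rw [mem_colA]
          rintro ⟨h, hc'⟩
          exact hv (by simpa using hc')
        simp only [this, decide_eq_false_iff_not, decide_eq_true_eq]
        simp at hv
        simp [hv]
  -- equiv 2 : proper colorings ≃ components → Bool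
  let e2 : {c : {V // V ∈ π} → Bool // Q c} ≃ (G.ConnectedComponent → Bool) := by
    refine ⟨fun c => Quot.lift (fun v => xor (c.1 v) (c₀ v)) ?_,
      fun g => ⟨fun v => xor (g (G.connectedComponentMk v)) (c₀ v), ?_⟩, ?_, ?_⟩
    · intro v w h
      refine eq_of_reachable (f := fun v => xor (c.1 v) (c₀ v)) ?_ h
      intro v w hvw
      have h1 := c.2 v w hvw
      have h2 := hc₀p v w hvw
      have hb : ∀ a b x y : Bool, a ≠ b → x ≠ y → xor a x = xor b y := by decide
      exact hb _ _ _ _ h1 h2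
    · intro v w hvw h
      have h1 : G.connectedComponentMk v = G.connectedComponentMk w :=
        SimpleGraph.ConnectedComponent.connectedComponentMk_eq_of_adj hvw
      dsimp only at h
      rw [h1] at h
      have h2 := hc₀p v w hvw
      have hb : ∀ a x y : Bool, x ≠ y → xor a x ≠ xor a y := by decide
      exact hb _ _ _ h2 h
    · rintro ⟨c, hc⟩
      simp only [Subtype.mk.injEq]
      funext v
      show xor (xor (c v) (c₀ v)) (c₀ v) = c v
      have hb : ∀ a b : Bool, xor (xor a b) b = a := by decide
      exact hb _ _
    · intro g
      funext comp
      refine SimpleGraph.ConnectedComponent.ind (fun v => ?_) comp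
      show xor (xor (g (G.connectedComponentMk v)) (c₀ v)) (c₀ v) = g (G.connectedComponentMk v)
      have hb : ∀ a b : Bool, xor (xor a b) b = a := by decide
      exact hb _ _
  have hfin : Finite G.ConnectedComponent := Quot.finite _
  have := Fintype.ofFinite G.ConnectedComponent
  calc (Finset.univ.filter P).card = Fintype.card {x // P x} := (Fintype.card_subtype P).symm
    _ = Fintype.card {c // Q c} := Fintype.card_congr e1
    _ = Fintype.card (G.ConnectedComponent → Bool) := Fintype.card_congr e2
    _ = 2 ^ Fintype.card G.ConnectedComponent := by simp [Fintype.card_fun]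
    _ = 2 ^ ccCount π := by rw [ccCount, Nat.card_eq_fintype_card]
end

section
/- Let (A, τ) be a noncommutative probability space with faithful tracial state τ, let {a_k} and {d_k} (k ∈ [n]) be two families such that the family of pairs (a_k, d_k) is free across k, and set c_k := a_k ⊗ d_k − τ(a_k)τ(d_k)·1⊗1 in (A⊗A, τ⊗τ). If i_1,…,i_m ∈ [n] and there exists l* ∈ [m] with i_{l*} ≠ i_j for all j ≠ l*, then (τ⊗τ)(c_{i_1} ⋯ c_{i_m}) = 0. -/
open scoped TensorProduct

structure NCState (A : Type*) [Ring A] [Algebra ℂ A] [StarRing A] where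
  τ : A →ₗ[ℂ] ℂ
  map_one : τ 1 = 1
  tracial : ∀ x y : A, τ (x * y) = τ (y * x)
  faithful : ∀ x : A, τ (star x * x) = 0 → x = 0

def FreeFamily {A : Type*} [Ring A] [Algebra ℂ A] (τ : A →ₗ[ℂ] ℂ)
    {ι : Type*} (S : ι → Subalgebra ℂ A) : Prop :=
  ∀ (p : ℕ), 0 < p → ∀ (x : Fin p → A) (j : Fin p → ι),
    (∀ i, x i ∈ S (j i)) → (∀ i, τ (x i) = 0) →
    (∀ (i : ℕ) (h : i + 1 < p), j ⟨i, by omega⟩ ≠ j ⟨i + 1, h⟩) →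
    τ ((List.ofFn x).prod) = 0

noncomputable def tState {A : Type*} [Ring A] [Algebra ℂ A] (τ : A →ₗ[ℂ] ℂ) :
    A ⊗[ℂ] A →ₗ[ℂ] ℂ :=
  (TensorProduct.lid ℂ ℂ).toLinearMap.comp (TensorProduct.map τ τ)


namespace FreeAux

variable {A : Type*} [Ring A] [Algebra ℂ A] {ι : Type*}

/-- value of a word presented as a list of (index, element) pairs -/
def wval (L : List (ι × A)) : A := (L.map Prod.snd).prod

variable (τ : A →ₗ[ℂ] ℂ) (B : ι → Subalgebra ℂ A)

/-- alternating centered words avoiding index t -/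
@[simp] theorem wval_nil : wval ([] : List (ι × A)) = 1 := rfl

theorem wval_append (L L' : List (ι × A)) : wval (L ++ L') = wval L * wval L' := by
  simp [wval]

theorem wval_cons (e : ι × A) (L : List (ι × A)) : wval (e :: L) = e.2 * wval L := by
  simp [wval]

@[simp] theorem wval_singleton (e : ι × A) : wval [e] = e.2 := by simp [wval]

def IsWord (t : ι) (L : List (ι × A)) : Prop :=
  (∀ p ∈ L, p.1 ≠ t ∧ p.2 ∈ B p.1 ∧ τ p.2 = 0) ∧ L.Chain' (fun p q => p.1 ≠ q.1)

/-- span of 1 and words -/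
def Wspan (t : ι) : Submodule ℂ A :=
  Submodule.span ℂ (insert 1 { w | ∃ L, L ≠ [] ∧ IsWord τ B t L ∧ w = wval L })

theorem genfree (hfree : FreeFamily τ B) (L : List (ι × A)) (hne : L ≠ [])
    (hmem : ∀ p ∈ L, p.2 ∈ B p.1 ∧ τ p.2 = 0)
    (halt : L.Chain' (fun p q => p.1 ≠ q.1)) : τ (wval L) = 0 := by
  have hp : 0 < L.length := List.length_pos_iff.2 hne
  have key := hfree L.length hp (fun j => (L.get j).2) (fun j => (L.get j).1)
    (fun j => (hmem _ (L.get_mem _)).1) (fun j => (hmem _ (L.get_mem _)).2)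
    (by
      intro j h
      exact List.isChain_iff_getElem.1 halt j (by omega))
  have : (List.ofFn fun j => (L.get j).2) = L.map Prod.snd := by
    rw [show (fun j => (L.get j).2) = Prod.snd ∘ L.get from rfl, ← List.map_ofFn,
      List.ofFn_get]
  rw [this] at key
  exact key


theorem word_mem_Wspan (t : ι) {L : List (ι × A)} (hne : L ≠ [])
    (hw : IsWord τ B t L) : wval L ∈ Wspan τ B t :=
  Submodule.subset_span (Set.mem_insert_iff.2 (Or.inr ⟨L, hne, hw, rfl⟩))

theorem one_mem_Wspan (t : ι) : (1 : A) ∈ Wspan τ B t :=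
  Submodule.subset_span (Set.mem_insert _ _)

theorem mul_words_mem (hτ1 : τ 1 = 1) (t : ι) :
    ∀ (N : ℕ) (L L' : List (ι × A)), L.length + L'.length ≤ N →
    L ≠ [] → L' ≠ [] → IsWord τ B t L → IsWord τ B t L' →
    wval L * wval L' ∈ Wspan τ B t := by
  intro N
  induction N with
  | zero => intro L L' hlen hne; simp at hlen; simp [hlen.1] at hne
  | succ N IH =>
    intro L L' hlen hne hne' hw hw'
    obtain ⟨L₀, e, rfl⟩ := L.eq_nil_or_concat'.resolve_left hne
    obtain ⟨e', T', rfl⟩ : ∃ e' T', L' = e' :: T' := match L', hne' with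
      | e' :: T', _ => ⟨e', T', rfl⟩
    have hwL₀ : IsWord τ B t L₀ :=
      ⟨fun p hp => hw.1 p (by simp [hp]), (List.isChain_append.1 hw.2).1⟩
    have hwT' : IsWord τ B t T' :=
      ⟨fun p hp => hw'.1 p (by simp [hp]), (List.isChain_cons.1 hw'.2).2⟩
    by_cases h : e.1 ≠ e'.1
    · have hword : IsWord τ B t ((L₀ ++ [e]) ++ (e' :: T')) := by
        refine ⟨fun p hp => ?_, List.isChain_append.2 ⟨hw.2, hw'.2, ?_⟩⟩
        · rcases List.mem_append.1 hp with h1 | h1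
          exacts [hw.1 p h1, hw'.1 p h1]
        · intro x hx y hy
          simp only [List.getLast?_concat, Option.mem_def, Option.some.injEq] at hx
          simp only [List.head?_cons, Option.mem_def, Option.some.injEq] at hy
          subst hx; subst hy; exact h
      rw [← wval_append]
      exact word_mem_Wspan τ B t (by simp) hword
    · push_neg at h
      set u : A := e.2 * e'.2 with hu_def
      set u0 : A := u - τ u • 1 with hu0_def
      have het : e.1 ≠ t := (hw.1 e (by simp)).1
      have hu : u ∈ B e.1 := by
        refine mul_mem (hw.1 e (by simp)).2.1 ?_
        rw [h]; exact (hw'.1 e' (by simp)).2.1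
      have hu0 : u0 ∈ B e.1 := sub_mem hu (Subalgebra.smul_mem _ (one_mem _) _)
      have hτu0 : τ u0 = 0 := by
        simp [hu0_def, hτ1]
      have key : wval (L₀ ++ [e]) * wval (e' :: T') =
          wval (L₀ ++ [(e.1, u0)]) * wval T' + τ u • (wval L₀ * wval T') := by
        simp only [wval_append, wval_cons, wval_singleton, wval_nil, hu0_def, hu_def]
        simp only [sub_mul, mul_sub, smul_mul_assoc, mul_smul_comm, mul_one, one_mul,
          mul_assoc]
        abel
      rw [key]
      refine Submodule.add_mem _ ?_ (Submodule.smul_mem _ _ ?_)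
      · have hwnew : IsWord τ B t (L₀ ++ [(e.1, u0)]) := by
          constructor
          · intro p hp
            rcases List.mem_append.1 hp with h1 | h1
            · exact hw.1 p (by simp [h1])
            · simp only [List.mem_singleton] at h1; subst h1; exact ⟨het, hu0, hτu0⟩
          · apply List.isChain_append.2
            refine ⟨hwL₀.2, List.isChain_singleton _, ?_⟩
            intro x hx y hy
            simp only [List.head?_cons, Option.mem_def, Option.some.injEq] at hy
            subst hy
            exact (List.isChain_append.1 hw.2).2.2 x hx e (by simp)
        rcases eq_or_ne T' [] with rfl | hT'
        · simpa using word_mem_Wspan τ B t (by simp) hwnew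
        · exact IH _ _ (by simp at hlen ⊢; omega) (by simp) hT' hwnew hwT'
      · rcases eq_or_ne L₀ [] with rfl | hL₀
        · rcases eq_or_ne T' [] with rfl | hT'
          · simpa using one_mem_Wspan τ B t
          · simpa using word_mem_Wspan τ B t hT' hwT'
        · rcases eq_or_ne T' [] with rfl | hT'
          · simpa using word_mem_Wspan τ B t hL₀ hwL₀
          · exact IH _ _ (by simp at hlen ⊢; omega) hL₀ hT' hwL₀ hwT'


theorem Wspan_mul_mem (hτ1 : τ 1 = 1) (t : ι) {x y : A}
    (hx : x ∈ Wspan τ B t) (hy : y ∈ Wspan τ B t) : x * y ∈ Wspan τ B t := by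
  induction hx using Submodule.span_induction generalizing y with
  | mem x hx =>
    rcases hx with rfl | ⟨L, hne, hw, rfl⟩
    · simpa using hy
    · induction hy using Submodule.span_induction with
      | mem y hy =>
        rcases hy with rfl | ⟨L', hne', hw', rfl⟩
        · simpa using word_mem_Wspan τ B t hne hw
        · exact mul_words_mem τ B hτ1 t (L.length + L'.length) L L' le_rfl hne hne' hw hw'
      | zero => simpa using Submodule.zero_mem _
      | add y z hy hz hy' hz' => rw [mul_add]; exact Submodule.add_mem _ hy' hz'
      | smul r y hy hy' => rw [mul_smul_comm]; exact Submodule.smul_mem _ _ hy'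
  | zero => simpa using Submodule.zero_mem _
  | add x z hx hz hx' hz' => rw [add_mul]; exact Submodule.add_mem _ (hx' hy) (hz' hy)
  | smul r x hx hx' => rw [smul_mul_assoc]; exact Submodule.smul_mem _ _ (hx' hy)

theorem elem_mem_Wspan (hτ1 : τ 1 = 1) {t k : ι} (hk : k ≠ t) {x : A}
    (hx : x ∈ B k) : x ∈ Wspan τ B t := by
  have h1 : wval [(k, x - τ x • (1 : A))] ∈ Wspan τ B t := by
    refine word_mem_Wspan τ B t (by simp) ⟨?_, List.isChain_singleton _⟩
    rintro p hp
    simp only [List.mem_singleton] at hp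
    subst hp
    exact ⟨hk, sub_mem hx (Subalgebra.smul_mem _ (one_mem _) _), by simp [hτ1]⟩
  have : x = wval [(k, x - τ x • (1 : A))] + τ x • 1 := by simp
  rw [this]
  exact Submodule.add_mem _ h1 (Submodule.smul_mem _ _ (one_mem_Wspan τ B t))

theorem key_tau0 (hfree : FreeFamily τ B) {t : ι} {b : A} (hb : b ∈ B t)
    (hb0 : τ b = 0) {x y : A} (hx : x ∈ Wspan τ B t) (hy : y ∈ Wspan τ B t) :
    τ (x * b * y) = 0 := by
  induction hx using Submodule.span_induction generalizing y with
  | mem x hx =>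
    induction hy using Submodule.span_induction with
    | mem y hy =>
      rcases hx with rfl | ⟨L, hne, hw, rfl⟩ <;>
        rcases hy with rfl | ⟨L', hne', hw', rfl⟩
      · simpa [hb0] using rfl
      · have : (1 : A) * b * wval L' = wval ((t, b) :: L') := by
          rw [wval_cons, one_mul]
        rw [this]
        refine genfree τ B hfree _ (by simp) ?_ ?_
        · rintro p hp
          rcases List.mem_cons.1 hp with rfl | hp
          · exact ⟨hb, hb0⟩
          · exact (hw'.1 p hp).2
        · refine List.isChain_cons.2 ⟨?_, hw'.2⟩
          intro y hy
          exact fun h => (hw'.1 y (List.mem_of_mem_head? hy)).1 h.symm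
      · have : wval L * b * 1 = wval (L ++ [(t, b)]) := by
          rw [wval_append, wval_singleton, mul_one]
        rw [this]
        refine genfree τ B hfree _ (by simp) ?_ ?_
        · rintro p hp
          rcases List.mem_append.1 hp with hp | hp
          · exact (hw.1 p hp).2
          · simp only [List.mem_singleton] at hp; subst hp; exact ⟨hb, hb0⟩
        · refine List.isChain_append.2 ⟨hw.2, List.isChain_singleton _, ?_⟩
          intro x hx y hy
          simp only [List.head?_cons, Option.mem_def, Option.some.injEq] at hy
          subst hy
          exact (hw.1 x (List.mem_of_mem_getLast? hx)).1
      · have : wval L * b * wval L' = wval (L ++ (t, b) :: L') := by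
          rw [wval_append, wval_cons, mul_assoc]
        rw [this]
        refine genfree τ B hfree _ (by simp) ?_ ?_
        · rintro p hp
          rcases List.mem_append.1 hp with hp | hp
          · exact (hw.1 p hp).2
          · rcases List.mem_cons.1 hp with rfl | hp
            · exact ⟨hb, hb0⟩
            · exact (hw'.1 p hp).2
        · refine List.isChain_append.2 ⟨hw.2, ?_, ?_⟩
          · refine List.isChain_cons.2 ⟨?_, hw'.2⟩
            intro y hy
            exact fun h => (hw'.1 y (List.mem_of_mem_head? hy)).1 h.symm
          · intro x hx y hy
            simp only [List.head?_cons, Option.mem_def, Option.some.injEq] at hy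
            subst hy
            exact (hw.1 x (List.mem_of_mem_getLast? hx)).1
    | zero => simp
    | add y z hy hz hy' hz' => rw [mul_add, map_add, hy', hz', add_zero]
    | smul r y hy hy' => rw [mul_smul_comm, map_smul, hy', smul_zero]
  | zero => simp
  | add x z hx hz hx' hz' =>
    rw [add_mul, add_mul, map_add, hx' hy, hz' hy, add_zero]
  | smul r x hx hx' =>
    rw [smul_mul_assoc, smul_mul_assoc, map_smul, hx' hy, smul_zero]

theorem key_tau (hfree : FreeFamily τ B) (hτ1 : τ 1 = 1) {t : ι} {b : A}
    (hb : b ∈ B t) {x y : A} (hx : x ∈ Wspan τ B t) (hy : y ∈ Wspan τ B t) :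
    τ (x * b * y) = τ b * τ (x * y) := by
  have hdecomp : x * b * y = x * (b - τ b • 1) * y + τ b • (x * y) := by
    simp only [mul_sub, sub_mul, mul_smul_comm, smul_mul_assoc, mul_one]
    abel
  rw [hdecomp, map_add, key_tau0 τ B hfree
    (sub_mem hb (Subalgebra.smul_mem _ (one_mem _) _)) (by simp [hτ1]) hx hy,
    zero_add, map_smul, smul_eq_mul]

theorem tState_tmul (x y : A) : tState τ (x ⊗ₜ[ℂ] y) = τ x * τ y := by
  simp [tState, smul_eq_mul, mul_comm]

/-- span of tensors with both legs in `Wspan` -/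
def Tspan (t : ι) : Submodule ℂ (A ⊗[ℂ] A) :=
  Submodule.span ℂ {z | ∃ x ∈ Wspan τ B t, ∃ y ∈ Wspan τ B t, z = x ⊗ₜ[ℂ] y}

theorem one_mem_Tspan (t : ι) : (1 : A ⊗[ℂ] A) ∈ Tspan τ B t := by
  refine Submodule.subset_span ⟨1, one_mem_Wspan τ B t, 1, one_mem_Wspan τ B t, ?_⟩
  rw [Algebra.TensorProduct.one_def]

theorem Tspan_mul_mem (hτ1 : τ 1 = 1) (t : ι) {X Y : A ⊗[ℂ] A}
    (hX : X ∈ Tspan τ B t) (hY : Y ∈ Tspan τ B t) : X * Y ∈ Tspan τ B t := by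
  induction hX using Submodule.span_induction generalizing Y with
  | mem X hX =>
    induction hY using Submodule.span_induction with
    | mem Y hY =>
      obtain ⟨x, hx, y, hy, rfl⟩ := hX
      obtain ⟨x', hx', y', hy', rfl⟩ := hY
      rw [Algebra.TensorProduct.tmul_mul_tmul]
      exact Submodule.subset_span ⟨_, Wspan_mul_mem τ B hτ1 t hx hx', _,
        Wspan_mul_mem τ B hτ1 t hy hy', rfl⟩
    | zero => simpa using Submodule.zero_mem _
    | add Y Z hY hZ hY' hZ' => rw [mul_add]; exact Submodule.add_mem _ hY' hZ'
    | smul r Y hY hY' => rw [mul_smul_comm]; exact Submodule.smul_mem _ _ hY'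
  | zero => simpa using Submodule.zero_mem _
  | add X Z hX hZ hX' hZ' => rw [add_mul]; exact Submodule.add_mem _ (hX' hY) (hZ' hY)
  | smul r X hX hX' => rw [smul_mul_assoc]; exact Submodule.smul_mem _ _ (hX' hY)

theorem key_tensor (hfree : FreeFamily τ B) (hτ1 : τ 1 = 1) {t : ι} {aa dd : A}
    (ha : aa ∈ B t) (hd : dd ∈ B t) {X Y : A ⊗[ℂ] A}
    (hX : X ∈ Tspan τ B t) (hY : Y ∈ Tspan τ B t) :
    tState τ (X * (aa ⊗ₜ[ℂ] dd) * Y) = τ aa * τ dd * tState τ (X * Y) := by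
  induction hX using Submodule.span_induction generalizing Y with
  | mem X hX =>
    induction hY using Submodule.span_induction with
    | mem Y hY =>
      obtain ⟨x, hx, y, hy, rfl⟩ := hX
      obtain ⟨x', hx', y', hy', rfl⟩ := hY
      rw [Algebra.TensorProduct.tmul_mul_tmul, Algebra.TensorProduct.tmul_mul_tmul,
        Algebra.TensorProduct.tmul_mul_tmul, tState_tmul, tState_tmul,
        key_tau τ B hfree hτ1 ha hx hx', key_tau τ B hfree hτ1 hd hy hy']
      ring
    | zero => simp
    | add Y Z hY hZ hY' hZ' =>
      rw [mul_add, mul_add, map_add, map_add, hY', hZ']; ring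
    | smul r Y hY hY' =>
      rw [mul_smul_comm, mul_smul_comm, map_smul, map_smul, hY', smul_eq_mul,
        smul_eq_mul]; ring
  | zero => simp
  | add X Z hX hZ hX' hZ' =>
    rw [add_mul, add_mul, add_mul, map_add, map_add, hX' hY, hZ' hY]; ring
  | smul r X hX hX' =>
    rw [smul_mul_assoc, smul_mul_assoc, smul_mul_assoc, map_smul, map_smul,
      hX' hY, smul_eq_mul, smul_eq_mul]; ring

theorem Tspan_list_prod_mem (hτ1 : τ 1 = 1) (t : ι) :
    ∀ L : List (A ⊗[ℂ] A), (∀ x ∈ L, x ∈ Tspan τ B t) → L.prod ∈ Tspan τ B t := by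
  intro L
  induction L with
  | nil => intro _; simpa using one_mem_Tspan τ B t
  | cons x L IH =>
    intro h
    rw [List.prod_cons]
    exact Tspan_mul_mem τ B hτ1 t (h x (by simp)) (IH fun y hy => h y (by simp [hy]))

end FreeAux


theorem centered_tensor_with_singleton_index_vanishes
    {A : Type*} [Ring A] [Algebra ℂ A] [StarRing A] (φ : NCState A)
    {n : ℕ} (a d : Fin n → A)
    (hfree : FreeFamily φ.τ (fun k => Algebra.adjoin ℂ ({a k, d k} : Set A)))
    (c : Fin n → A ⊗[ℂ] A)
    (hc : ∀ k, c k = a k ⊗ₜ[ℂ] d k - (φ.τ (a k) * φ.τ (d k)) • (1 : A ⊗[ℂ] A))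
    {m : ℕ} (hm : 0 < m) (i : Fin m → Fin n) (l : Fin m)
    (hl : ∀ j : Fin m, j ≠ l → i j ≠ i l) :
    tState φ.τ ((List.ofFn fun j => c (i j)).prod) = 0 := by
  classical
  set τ : A →ₗ[ℂ] ℂ := φ.τ with hτ
  set B : Fin n → Subalgebra ℂ A := fun k => Algebra.adjoin ℂ ({a k, d k} : Set A)
    with hBdef
  have hτ1 : τ 1 = 1 := φ.map_one
  set t : Fin n := i l with ht
  set f : Fin m → A ⊗[ℂ] A := fun j => c (i j) with hf
  have hmem : ∀ j : Fin m, j ≠ l → f j ∈ FreeAux.Tspan τ B t := by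
    intro j hj
    have hk : i j ≠ t := hl j hj
    have haW : a (i j) ∈ FreeAux.Wspan τ B t :=
      FreeAux.elem_mem_Wspan τ B hτ1 hk (Algebra.subset_adjoin (by simp))
    have hdW : d (i j) ∈ FreeAux.Wspan τ B t :=
      FreeAux.elem_mem_Wspan τ B hτ1 hk (Algebra.subset_adjoin (by simp))
    rw [hf]
    simp only [hc (i j)]
    exact Submodule.sub_mem _ (Submodule.subset_span ⟨_, haW, _, hdW, rfl⟩)
      (Submodule.smul_mem _ _ (FreeAux.one_mem_Tspan τ B t))
  have hlen : (List.ofFn f).length = m := by simp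
  have hvlt : l.val < (List.ofFn f).length := by rw [hlen]; exact l.isLt
  have h1 : (List.ofFn f).drop l.val = f l :: (List.ofFn f).drop (l.val + 1) := by
    rw [List.drop_eq_getElem_cons hvlt]
    congr 1
    rw [List.getElem_ofFn]
  have hsplit : (List.ofFn f).prod = ((List.ofFn f).take l.val).prod * (f l * ((List.ofFn f).drop (l.val + 1)).prod) := by
    rw [← List.prod_take_mul_prod_drop (List.ofFn f) l.val, h1, List.prod_cons]
  have htake : (List.ofFn f).take l.val =
      List.ofFn (fun j : Fin l.val => f (Fin.castLE l.isLt.le j)) := by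
    apply List.ext_getElem
    · simp
    · intro j hj1 hj2
      rw [List.getElem_take, List.getElem_ofFn, List.getElem_ofFn]
      rfl
  have hdrop : (List.ofFn f).drop (l.val + 1) =
      List.ofFn (fun j : Fin (m - (l.val + 1)) => f ⟨l.val + 1 + j.val, by omega⟩) := by
    apply List.ext_getElem
    · simp
    · intro j hj1 hj2
      rw [List.getElem_drop, List.getElem_ofFn, List.getElem_ofFn]
  have hX : ((List.ofFn f).take l.val).prod ∈ FreeAux.Tspan τ B t := by
    refine FreeAux.Tspan_list_prod_mem τ B hτ1 t _ ?_
    rw [htake]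
    rw [List.forall_mem_ofFn_iff]
    intro j
    refine hmem _ ?_
    intro hcontr
    have h2 : (j : ℕ) = l.val := by simpa using congrArg Fin.val hcontr
    have := j.isLt
    omega
  have hY : ((List.ofFn f).drop (l.val + 1)).prod ∈ FreeAux.Tspan τ B t := by
    refine FreeAux.Tspan_list_prod_mem τ B hτ1 t _ ?_
    rw [hdrop]
    rw [List.forall_mem_ofFn_iff]
    intro j
    refine hmem _ ?_
    intro hcontr
    have : l.val + 1 + j.val = l.val := congrArg Fin.val hcontr
    omega
  have hfl : f l = a t ⊗ₜ[ℂ] d t - (τ (a t) * τ (d t)) • (1 : A ⊗[ℂ] A) := by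
    rw [hf]; exact hc (i l)
  have hat : a t ∈ B t := Algebra.subset_adjoin (by simp)
  have hdt : d t ∈ B t := Algebra.subset_adjoin (by simp)
  have hexp : ((List.ofFn f).take l.val).prod * (f l * ((List.ofFn f).drop (l.val + 1)).prod) =
      ((List.ofFn f).take l.val).prod * (a t ⊗ₜ[ℂ] d t) * ((List.ofFn f).drop (l.val + 1)).prod -
        (τ (a t) * τ (d t)) • (((List.ofFn f).take l.val).prod * ((List.ofFn f).drop (l.val + 1)).prod) := by
    rw [hfl]
    simp only [mul_sub, sub_mul, mul_smul_comm, smul_mul_assoc, mul_one, one_mul,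
      mul_assoc]
  show tState τ ((List.ofFn f).prod) = 0
  rw [hsplit, hexp, map_sub, map_smul,
    FreeAux.key_tensor τ B hfree hτ1 hat hdt hX hY, smul_eq_mul, sub_self]
end
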